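/- Let g be a Lie algebra with a vector space decomposition g = g₊ ⊕ g₋ into two Lie subalgebras, and let R = P₊ − P₋ where P₊ and P₋ are the projections onto g₊ and g₋. Then the bracket [X,Y]_R := (1/2)([RX,Y] + [X,RY]) equals [X₊,Y₊] − [X₋,Y₋] (where X± = P±X) and satisfies the Jacobi identity, so it defines a Lie algebra structure on the underlying vector space of g. -/
import Mathlib


/-- If `g = g₊ ⊕ g₋` (vector space direct sum) with `g₊ = range P₊`,
`g₋ = range P₋` Lie subalgebras and `R = P₊ - P₋`, then the bracket
`[X,Y]_R := (1/2)([RX,Y] + [X,RY])` equals `[X₊,Y₊] - [X₋,Y₋]` and satisfies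
antisymmetry and the Jacobi identity, hence defines a Lie algebra structure. -/
theorem aks_R_bracket {K : Type*} [Field K] [CharZero K]
    {g : Type*} [LieRing g] [LieAlgebra K g]
    (Pp Pm : g →ₗ[K] g)
    (hsum : Pp + Pm = LinearMap.id)
    (hPp : Pp ∘ₗ Pp = Pp) (hPm : Pm ∘ₗ Pm = Pm)
    (hPpPm : Pp ∘ₗ Pm = 0) (hPmPp : Pm ∘ₗ Pp = 0)
    (hsubp : ∀ x y : g, ⁅Pp x, Pp y⁆ ∈ LinearMap.range Pp)
    (hsubm : ∀ x y : g, ⁅Pm x, Pm y⁆ ∈ LinearMap.range Pm) :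
    (∀ X Y : g, ((2 : K)⁻¹) • (⁅(Pp - Pm) X, Y⁆ + ⁅X, (Pp - Pm) Y⁆)
        = ⁅Pp X, Pp Y⁆ - ⁅Pm X, Pm Y⁆) ∧
    (∀ X Y : g, (⁅Pp X, Pp Y⁆ - ⁅Pm X, Pm Y⁆)
        = -(⁅Pp Y, Pp X⁆ - ⁅Pm Y, Pm X⁆)) ∧
    (∀ X Y Z : g,
      (fun A B : g => ⁅Pp A, Pp B⁆ - ⁅Pm A, Pm B⁆) X
          ((fun A B : g => ⁅Pp A, Pp B⁆ - ⁅Pm A, Pm B⁆) Y Z)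
      + (fun A B : g => ⁅Pp A, Pp B⁆ - ⁅Pm A, Pm B⁆) Y
          ((fun A B : g => ⁅Pp A, Pp B⁆ - ⁅Pm A, Pm B⁆) Z X)
      + (fun A B : g => ⁅Pp A, Pp B⁆ - ⁅Pm A, Pm B⁆) Z
          ((fun A B : g => ⁅Pp A, Pp B⁆ - ⁅Pm A, Pm B⁆) X Y) = 0) := by
  have hdec : ∀ x : g, Pp x + Pm x = x := by
    intro x
    have := congrArg (fun f : g →ₗ[K] g => f x) hsum
    simpa using this
  -- Pp fixes range Pp elements, Pm kills them; and vice versa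
  have hPpfix : ∀ z ∈ LinearMap.range Pp, Pp z = z ∧ Pm z = 0 := by
    rintro _ ⟨w, rfl⟩
    constructor
    · exact congrArg (fun f : g →ₗ[K] g => f w) hPp
    · exact congrArg (fun f : g →ₗ[K] g => f w) hPmPp
  have hPmfix : ∀ z ∈ LinearMap.range Pm, Pm z = z ∧ Pp z = 0 := by
    rintro _ ⟨w, rfl⟩
    constructor
    · exact congrArg (fun f : g →ₗ[K] g => f w) hPm
    · exact congrArg (fun f : g →ₗ[K] g => f w) hPpPm
  refine ⟨?_, ?_, ?_⟩
  · intro X Y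
    have hX := hdec X
    have hY := hdec Y
    have h2 : ⁅(Pp - Pm) X, Y⁆ + ⁅X, (Pp - Pm) Y⁆
        = (2 : K) • (⁅Pp X, Pp Y⁆ - ⁅Pm X, Pm Y⁆) := by
      rw [LinearMap.sub_apply, LinearMap.sub_apply]
      nth_rewrite 1 [← hY]
      nth_rewrite 3 [← hX]
      simp only [sub_lie, lie_sub, lie_add, add_lie, two_smul, smul_sub]
      abel
    rw [h2, smul_smul, inv_mul_cancel₀ (two_ne_zero), one_smul]
  · intro X Y
    rw [← lie_skew (Pp Y) (Pp X), ← lie_skew (Pm Y) (Pm X)]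
    abel
  · intro X Y Z
    simp only []
    -- key: project the bracket
    have key : ∀ A B : g,
        Pp (⁅Pp A, Pp B⁆ - ⁅Pm A, Pm B⁆) = ⁅Pp A, Pp B⁆ ∧
        Pm (⁅Pp A, Pp B⁆ - ⁅Pm A, Pm B⁆) = -⁅Pm A, Pm B⁆ := by
      intro A B
      obtain ⟨h1, h2⟩ := hPpfix _ (hsubp A B)
      obtain ⟨h3, h4⟩ := hPmfix _ (hsubm A B)
      constructor
      · rw [map_sub, h1, h4, sub_zero]
      · rw [map_sub, h2, h3, zero_sub]
    have expand : ∀ A B C : g,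
        ⁅Pp A, Pp (⁅Pp B, Pp C⁆ - ⁅Pm B, Pm C⁆)⁆
          - ⁅Pm A, Pm (⁅Pp B, Pp C⁆ - ⁅Pm B, Pm C⁆)⁆
        = ⁅Pp A, ⁅Pp B, Pp C⁆⁆ + ⁅Pm A, ⁅Pm B, Pm C⁆⁆ := by
      intro A B C
      rw [(key B C).1, (key B C).2, lie_neg, sub_neg_eq_add]
    rw [expand X Y Z, expand Y Z X, expand Z X Y]
    have jp : ⁅Pp X, ⁅Pp Y, Pp Z⁆⁆ + ⁅Pp Y, ⁅Pp Z, Pp X⁆⁆ + ⁅Pp Z, ⁅Pp X, Pp Y⁆⁆ = 0 := by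
      exact lie_jacobi _ _ _
    have jm : ⁅Pm X, ⁅Pm Y, Pm Z⁆⁆ + ⁅Pm Y, ⁅Pm Z, Pm X⁆⁆ + ⁅Pm Z, ⁅Pm X, Pm Y⁆⁆ = 0 := by
      exact lie_jacobi _ _ _
    calc (⁅Pp X, ⁅Pp Y, Pp Z⁆⁆ + ⁅Pm X, ⁅Pm Y, Pm Z⁆⁆)
        + (⁅Pp Y, ⁅Pp Z, Pp X⁆⁆ + ⁅Pm Y, ⁅Pm Z, Pm X⁆⁆)
        + (⁅Pp Z, ⁅Pp X, Pp Y⁆⁆ + ⁅Pm Z, ⁅Pm X, Pm Y⁆⁆)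
        = (⁅Pp X, ⁅Pp Y, Pp Z⁆⁆ + ⁅Pp Y, ⁅Pp Z, Pp X⁆⁆ + ⁅Pp Z, ⁅Pp X, Pp Y⁆⁆)
          + (⁅Pm X, ⁅Pm Y, Pm Z⁆⁆ + ⁅Pm Y, ⁅Pm Z, Pm X⁆⁆ + ⁅Pm Z, ⁅Pm X, Pm Y⁆⁆) := by abel
      _ = 0 := by rw [jp, jm, add_zero]
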